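/- In a frame L, for every element a, the meet ⋀{x ∈ L : a < x} is exact, i.e., for every b ∈ L, ⋀{x ∨ b : a < x} = (⋀{x : a < x}) ∨ b. -/
import Mathlib

/-- In a frame `L`, for every `a`, the meet `⋀{x | a < x}` is exact: for all `b`,
`⋀{x ⊔ b | a < x} = (⋀{x | a < x}) ⊔ b`. -/
theorem stmt2 {L : Type*} [Order.Frame L] (a b : L) :
    sInf ((· ⊔ b) '' {x : L | a < x}) = sInf {x : L | a < x} ⊔ b := by
  apply le_antisymm
  · have ham : a ≤ sInf {x : L | a < x} := le_sInf fun x hx => hx.le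
    rcases eq_or_lt_of_le ham with h | h
    · by_cases hb : b ≤ a
      · have himg : (· ⊔ b) '' {x : L | a < x} = {x : L | a < x} := by
          ext y
          constructor
          · rintro ⟨x, hx, rfl⟩
            simpa [sup_eq_left.2 (hb.trans hx.le)] using hx
          · intro hy
            exact ⟨y, hy, sup_eq_left.2 (hb.trans hy.le)⟩
        rw [himg, sup_eq_left.2 (hb.trans ham)]
      · have hab : a < a ⊔ b := left_lt_sup.2 hb
        calc sInf ((· ⊔ b) '' {x : L | a < x}) ≤ (a ⊔ b) ⊔ b :=
              sInf_le ⟨a ⊔ b, hab, rfl⟩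
          _ = a ⊔ b := by rw [sup_assoc, sup_idem]
          _ = sInf {x : L | a < x} ⊔ b := by rw [← h]
    · exact sInf_le ⟨sInf {x : L | a < x}, h, rfl⟩
  · exact le_sInf (by rintro _ ⟨x, hx, rfl⟩; exact sup_le_sup_right (sInf_le hx) b)
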